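/- Let X be a compact Hausdorff space such that for every closed set F ⊆ X there exist a compact metrizable space Y and a continuous surjection g : X → Y such that the restriction of g to g⁻¹(g(F)) is an irreducible map onto g(F). Then every closed subset of X is a Gδ set and is separable; consequently X is hereditarily Lindelöf and hereditarily separable. -/

import Mathlib

open Set TopologicalSpace

/-- If for every closed `F ⊆ X` there is a compact metrizable `Y` and a continuous
surjection `g : X → Y` whose restriction to `g⁻¹(g(F))` is irreducible onto `g(F)`,
then every closed subset of `X` is a Gδ and separable, and `X` is hereditarily
Lindelöf and hereditarily separable. -/
theorem stmt4 {X : Type*} [TopologicalSpace X] [CompactSpace X] [T2Space X]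
    (h : ∀ F : Set X, IsClosed F →
      ∃ (Y : Type) (_ : TopologicalSpace Y), CompactSpace Y ∧ MetrizableSpace Y ∧
        ∃ g : X → Y, Continuous g ∧ Function.Surjective g ∧
          (∀ C ⊆ g ⁻¹' (g '' F), IsClosed C → g '' C = g '' F →
            C = g ⁻¹' (g '' F))) :
    (∀ F : Set X, IsClosed F → IsGδ F ∧ IsSeparable F) ∧
    HereditarilyLindelofSpace X ∧
    (∀ S : Set X, IsSeparable S) := by
  have key : ∀ F : Set X, IsClosed F → IsGδ F ∧ IsSeparable F := by
    intro F hF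
    obtain ⟨Y, _, _, _, g, hgc, hgs, hirr⟩ := h F hF
    letI := metrizableSpaceMetric Y
    -- F = g ⁻¹' (g '' F)
    have himgF : IsClosed (g '' F) := (hF.isCompact.image hgc).isClosed
    have hFeq : F = g ⁻¹' (g '' F) :=
      hirr F (subset_preimage_image g F) hF rfl
    constructor
    · obtain ⟨V, hVo, hVeq⟩ := (himgF.isGδ).eq_iInter_nat
      have : F = ⋂ n, g ⁻¹' (V n) := by rw [hFeq, hVeq, preimage_iInter]
      rw [this]
      exact IsGδ.iInter_of_isOpen fun n => (hVo n).preimage hgc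
    · -- separability
      haveI : SecondCountableTopology (g '' F) := inferInstance
      obtain ⟨D, hDc, hDd⟩ := TopologicalSpace.exists_countable_dense (g '' F)
      -- pick preimages in F
      have hpick : ∀ y : g '' F, ∃ x ∈ F, g x = (y : Y) := fun y => y.2
      choose f hfF hfg using hpick
      set T : Set X := f '' D with hT
      have hTc : T.Countable := hDc.image f
      have hTF : T ⊆ F := by rintro x ⟨d, _, rfl⟩; exact hfF d
      set C : Set X := closure T with hC
      have hCF : C ⊆ F := hF.closure_subset_iff.mpr hTF
      have hCclosed : IsClosed C := isClosed_closure
      have hCimg : g '' C = g '' F := by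
        apply Subset.antisymm (image_mono hCF)
        have hgC_closed : IsClosed (g '' C) :=
          ((hCclosed.isCompact).image hgc).isClosed
        have hsub : (↑) '' D ⊆ g '' C := by
          rintro y ⟨d, hd, rfl⟩
          exact ⟨f d, subset_closure ⟨d, hd, rfl⟩, hfg d⟩
        have : g '' F ⊆ closure ((↑) '' D) := Subtype.dense_iff.mp hDd
        exact this.trans (hgC_closed.closure_subset_iff.mpr hsub)
      have : C = g ⁻¹' (g '' F) :=
        hirr C (hCF.trans (hFeq.le)) hCclosed hCimg
      refine ⟨T, hTc, ?_⟩
      rw [hFeq, ← this]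
  refine ⟨key, ?_, ?_⟩
  · -- hereditarily Lindelöf
    refine ⟨fun s _ => ?_⟩
    rw [isLindelof_iff_countable_subcover]
    intro ι U hUo hsU
    -- ⋃ U i is Lindelöf since its complement is a closed Gδ
    obtain ⟨V, hVo, hVeq⟩ := ((key (⋃ i, U i)ᶜ (isOpen_iUnion hUo).isClosed_compl).1).eq_iInter_nat
    have hLin : IsLindelof (⋃ i, U i) := by
      have : (⋃ i, U i) = ⋃ n, (V n)ᶜ := by
        rw [← compl_inj_iff, hVeq, compl_iUnion]
        simp
      rw [this]
      exact isLindelof_iUnion fun n => ((hVo n).isClosed_compl.isCompact).isLindelof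
    obtain ⟨t, htc, hts⟩ := hLin.elim_countable_subcover U hUo le_rfl
    exact ⟨t, htc, hsU.trans hts⟩
  · intro S
    obtain ⟨c, hc, hsc⟩ := (key (closure S) isClosed_closure).2
    exact ⟨c, hc, subset_closure.trans hsc⟩
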